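/- Consider pairwise disjoint finite sets X_1, …, X_k ⊆ ℝ^n with N total points, and suppose the mixing probability measure μ (supported in [0,1]) is absolutely continuous with respect to Lebesgue measure. Then for every class i and every x ∈ X_i, the denominator defining h_ε^i(x) is positive for all ε > 0, and lim_{ε→0⁺} h_ε^i(x) = 1 (hence lim_{ε→0⁺} h_ε^j(x) = 0 for every j ≠ i). In other words, the Mixup-optimal classifier assigns every original data point its correct class. -/

import Mathlib

open MeasureTheory

noncomputable section

variable {E : Type*} [NormedAddCommGroup E] [NormedSpace ℝ E]

/-- The set of mixing coefficients `λ ∈ [0,1]` for which the mixed point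
`λ • s + (1 - λ) • t` lies within distance `ε` of `x`. -/
def mixSet (s t x : E) (ε : ℝ) : Set ℝ :=
  {l : ℝ | l ∈ Set.Icc (0 : ℝ) 1 ∧ ‖l • s + (1 - l) • t - x‖ < ε}

/-- `ξ^{i,j}_{x,ε}`: the (normalized) measure of pairs and coefficients mixing
a point of `Xi` with a point of `Xj` into the `ε`-ball around `x`. -/
def xiMeas (μ : Measure ℝ) (N : ℕ) (Xi Xj : Finset E) (x : E) (ε : ℝ) : ℝ :=
  (1 / (N : ℝ) ^ 2) * ∑ s ∈ Xi, ∑ t ∈ Xj, (μ (mixSet s t x ε)).toReal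

/-- `ξ^{i,j}_{x,ε,λ}`: the corresponding expectation of `λ`. -/
def xiLam (μ : Measure ℝ) (N : ℕ) (Xi Xj : Finset E) (x : E) (ε : ℝ) : ℝ :=
  (1 / (N : ℝ) ^ 2) * ∑ s ∈ Xi, ∑ t ∈ Xj, ∫ l in mixSet s t x ε, l ∂μ

/-- Numerator of the Mixup-optimal local classifier value `h_ε^i(x)`. -/
def hNum {k : ℕ} (μ : Measure ℝ) (N : ℕ) (X : Fin k → Finset E) (i : Fin k)
    (x : E) (ε : ℝ) : ℝ :=
  xiMeas μ N (X i) (X i) x ε +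
    ∑ j ∈ Finset.univ.filter (fun j => j ≠ i),
      (xiLam μ N (X i) (X j) x ε +
        (xiMeas μ N (X j) (X i) x ε - xiLam μ N (X j) (X i) x ε))

/-- Denominator of the Mixup-optimal local classifier value. -/
def hDen {k : ℕ} (μ : Measure ℝ) (N : ℕ) (X : Fin k → Finset E) (x : E) (ε : ℝ) : ℝ :=
  ∑ q : Fin k, hNum μ N X q x ε

/-- The Mixup-optimal local classifier value `h_ε^i(x)`. -/
def hEps {k : ℕ} (μ : Measure ℝ) (N : ℕ) (X : Fin k → Finset E) (i : Fin k)
    (x : E) (ε : ℝ) : ℝ :=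
  hNum μ N X i x ε / hDen μ N X x ε

end


noncomputable section AuxLemmas

open MeasureTheory Filter

variable {E : Type*} [NormedAddCommGroup E] [NormedSpace ℝ E]

lemma measurableSet_mixSet (s t x : E) (ε : ℝ) : MeasurableSet (mixSet s t x ε) := by
  have h : mixSet s t x ε
      = Set.Icc 0 1 ∩ {l : ℝ | ‖l • s + (1 - l) • t - x‖ < ε} := rfl
  rw [h]
  exact measurableSet_Icc.inter
    ((isOpen_lt (by fun_prop) continuous_const).measurableSet)

lemma mixSet_mono (s t x : E) {ε ε' : ℝ} (h : ε ≤ ε') :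
    mixSet s t x ε ⊆ mixSet s t x ε' := fun l hl => ⟨hl.1, hl.2.trans_le h⟩

lemma mixSet_self (x : E) {ε : ℝ} (hε : 0 < ε) :
    mixSet x x x ε = Set.Icc (0:ℝ) 1 := by
  ext l
  have hxx : l • x + (1 - l) • x = x := by rw [← add_smul]; simp
  simp [mixSet, hxx, hε]

lemma mixSet_iInter (s t x : E) :
    ⋂ ε ∈ Set.Ioi (0:ℝ), mixSet s t x ε
      = {l | l ∈ Set.Icc (0:ℝ) 1 ∧ l • s + (1 - l) • t = x} := by
  ext l
  simp only [Set.mem_iInter, Set.mem_Ioi, mixSet, Set.mem_setOf_eq]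
  constructor
  · intro h
    obtain ⟨h1, -⟩ := h 1 one_pos
    refine ⟨h1, ?_⟩
    by_contra hne
    have hpos : 0 < ‖l • s + (1 - l) • t - x‖ := by
      rw [norm_pos_iff, sub_ne_zero]; exact hne
    exact absurd (h _ hpos).2 (lt_irrefl _)
  · rintro ⟨h1, h2⟩ ε hε
    exact ⟨h1, by rw [h2, sub_self, norm_zero]; exact hε⟩

lemma mixInt_nonneg (μ : Measure ℝ) (s t x : E) (ε : ℝ) :
    0 ≤ ∫ l in mixSet s t x ε, l ∂μ :=
  setIntegral_nonneg (measurableSet_mixSet s t x ε) (fun _ hl => hl.1.1)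

lemma mixInt_integrable (μ : Measure ℝ) [IsFiniteMeasure μ] (s t x : E) (ε : ℝ) :
    IntegrableOn (fun l : ℝ => l) (mixSet s t x ε) μ := by
  apply Measure.integrableOn_of_bounded (M := 1) (measure_ne_top μ _)
    aestronglyMeasurable_id
  filter_upwards [ae_restrict_mem (measurableSet_mixSet s t x ε)] with l hl
  rw [Real.norm_eq_abs, abs_le, id_eq]
  exact ⟨by linarith [hl.1.1], hl.1.2⟩

lemma mixInt_le (μ : Measure ℝ) [IsFiniteMeasure μ] (s t x : E) (ε : ℝ) :
    ∫ l in mixSet s t x ε, l ∂μ ≤ (μ (mixSet s t x ε)).toReal := by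
  calc ∫ l in mixSet s t x ε, l ∂μ
      ≤ ∫ _ in mixSet s t x ε, (1:ℝ) ∂μ := by
        refine setIntegral_mono_on (mixInt_integrable μ s t x ε)
          (integrableOn_const (measure_ne_top μ _) (by simp))
          (measurableSet_mixSet s t x ε) (fun l hl => hl.1.2)
    _ = (μ (mixSet s t x ε)).toReal := by simp; rfl

lemma tendsto_measure_mixSet (μ : Measure ℝ) [IsFiniteMeasure μ] (s t x : E) :
    Tendsto (fun ε => μ (mixSet s t x ε)) (nhdsWithin 0 (Set.Ioi 0))
      (nhds (μ {l | l ∈ Set.Icc (0:ℝ) 1 ∧ l • s + (1 - l) • t = x})) := by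
  have h := tendsto_measure_biInter_gt (μ := μ) (s := fun ε => mixSet s t x ε)
    (a := (0:ℝ))
    (fun r _ => (measurableSet_mixSet s t x r).nullMeasurableSet)
    (fun a b _ hab => mixSet_mono s t x hab)
    ⟨1, one_pos, measure_ne_top μ _⟩
  have hset : (⋂ r, ⋂ (_ : r > (0:ℝ)), mixSet s t x r)
      = {l | l ∈ Set.Icc (0:ℝ) 1 ∧ l • s + (1 - l) • t = x} := mixSet_iInter s t x
  rw [hset] at h
  exact h

end AuxLemmas

set_option maxHeartbeats 1000000 in
open MeasureTheory Filter in
/-- For finite pairwise-disjoint class supports and an absolutely continuous mixing measure,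
the Mixup-optimal classifier assigns every original data point its correct class:
the denominator is positive for all `ε > 0`, `h_ε^i(x) → 1` as `ε → 0⁺` for `x ∈ X_i`,
and `h_ε^j(x) → 0` for every `j ≠ i`. -/
theorem mixup_correct_on_original_points
    {n k : ℕ} (X : Fin k → Finset (EuclideanSpace ℝ (Fin n)))
    (hdisj : ∀ i j : Fin k, i ≠ j → Disjoint (X i) (X j))
    (N : ℕ) (hN : N = ∑ i, (X i).card)
    (μ : Measure ℝ) [IsProbabilityMeasure μ]
    (hsupp : μ (Set.Icc (0 : ℝ) 1)ᶜ = 0) (hac : μ ≪ volume)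
    (i : Fin k) (x : EuclideanSpace ℝ (Fin n)) (hx : x ∈ X i) :
    (∀ ε > (0 : ℝ), 0 < hDen μ N X x ε) ∧
    Tendsto (fun ε => hEps μ N X i x ε) (nhdsWithin 0 (Set.Ioi 0)) (nhds 1) ∧
    ∀ j : Fin k, j ≠ i →
      Tendsto (fun ε => hEps μ N X j x ε) (nhdsWithin 0 (Set.Ioi 0)) (nhds 0) := by
  classical
  -- basic positivity of N
  have hNpos : 0 < N := by
    rw [hN]
    calc 0 < (X i).card := Finset.card_pos.2 ⟨x, hx⟩
      _ ≤ ∑ j, (X j).card :=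
        Finset.single_le_sum (f := fun j => (X j).card)
          (fun _ _ => Nat.zero_le _) (Finset.mem_univ i)
  have hN2 : (0:ℝ) < 1 / (N:ℝ)^2 := by positivity
  -- μ gives full mass to [0,1]
  have hIcc1 : μ (Set.Icc (0:ℝ) 1) = 1 := by
    have h := measure_add_measure_compl (μ := μ) (measurableSet_Icc (a := (0:ℝ)) (b := 1))
    rw [hsupp, add_zero, measure_univ] at h
    exact h
  -- x belongs to no other class
  have hxnot : ∀ q : Fin k, q ≠ i → x ∉ X q := fun q hq hxq =>
    (Finset.disjoint_left.1 (hdisj q i hq)) hxq hx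
  -- limit set measure
  have hLone : μ {l | l ∈ Set.Icc (0:ℝ) 1 ∧ l • x + (1 - l) • x = x} = 1 := by
    have : {l | l ∈ Set.Icc (0:ℝ) 1 ∧ l • x + (1 - l) • x = x} = Set.Icc (0:ℝ) 1 := by
      ext l
      have hxx : l • x + (1 - l) • x = x := by rw [← add_smul]; simp
      simp [hxx]
    rw [this, hIcc1]
  have hLzero : ∀ s t : (EuclideanSpace ℝ (Fin n)), ¬(s = x ∧ t = x) →
      μ {l | l ∈ Set.Icc (0:ℝ) 1 ∧ l • s + (1 - l) • t = x} = 0 := by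
    intro s t h
    by_cases hst : s = t
    · subst hst
      rcases eq_or_ne s x with hsx | hsx
      · exact absurd ⟨hsx, hsx⟩ h
      · have : {l | l ∈ Set.Icc (0:ℝ) 1 ∧ l • s + (1 - l) • s = x} = ∅ := by
          ext l
          have hxx : l • s + (1 - l) • s = s := by rw [← add_smul]; simp
          simp [hxx, hsx]
        rw [this, measure_empty]
    · apply hac
      apply Set.Subsingleton.measure_zero
      intro a ha b hb
      have ha2 : a • (s - t) = x - t := by
        have h2 := ha.2
        rw [sub_smul, one_smul] at h2
        rw [smul_sub, ← h2]
        abel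
      have hb2 : b • (s - t) = x - t := by
        have h2 := hb.2
        rw [sub_smul, one_smul] at h2
        rw [smul_sub, ← h2]
        abel
      have : (a - b) • (s - t) = 0 := by rw [sub_smul, ha2, hb2, sub_self]
      rcases smul_eq_zero.1 this with h1 | h1
      · linarith [sub_eq_zero.1 h1, le_of_eq (sub_eq_zero.1 h1)]
      · exact absurd (sub_eq_zero.1 h1) hst
  -- pointwise limits of the measure terms
  have hT : ∀ s t : (EuclideanSpace ℝ (Fin n)), Tendsto (fun ε => (μ (mixSet s t x ε)).toReal)
      (nhdsWithin 0 (Set.Ioi 0)) (nhds (if s = x ∧ t = x then 1 else 0)) := by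
    intro s t
    have h1 := (ENNReal.tendsto_toReal (a := μ {l | l ∈ Set.Icc (0:ℝ) 1 ∧
        l • s + (1 - l) • t = x}) (measure_ne_top μ _)).comp
      (tendsto_measure_mixSet μ s t x)
    by_cases h : s = x ∧ t = x
    · obtain ⟨hs, ht⟩ := h; subst hs; subst ht
      rw [if_pos ⟨rfl, rfl⟩]
      rw [hLone] at h1
      simpa [Function.comp_def] using h1
    · rw [if_neg h]
      rw [hLzero s t h] at h1
      simpa [Function.comp_def] using h1
  -- pointwise limits of the integral terms (vanishing case)
  have hG : ∀ s t : (EuclideanSpace ℝ (Fin n)), ¬(s = x ∧ t = x) →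
      Tendsto (fun ε => ∫ l in mixSet s t x ε, l ∂μ)
        (nhdsWithin 0 (Set.Ioi 0)) (nhds 0) := by
    intro s t h
    have hT0 := hT s t
    rw [if_neg h] at hT0
    exact squeeze_zero (fun ε => mixInt_nonneg μ s t x ε)
      (fun ε => mixInt_le μ s t x ε) hT0
  -- limits of xiMeas
  have hMeasT : ∀ A B : Finset (EuclideanSpace ℝ (Fin n)),
      Tendsto (fun ε => xiMeas μ N A B x ε) (nhdsWithin 0 (Set.Ioi 0))
        (nhds ((1/(N:ℝ)^2) * ∑ s ∈ A, ∑ t ∈ B,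
          (if s = x ∧ t = x then (1:ℝ) else 0))) := by
    intro A B
    simp only [xiMeas]
    exact (tendsto_finset_sum _ fun s _ =>
      tendsto_finset_sum _ fun t _ => hT s t).const_mul _
  have hMeasT0 : ∀ A B : Finset (EuclideanSpace ℝ (Fin n)), (∀ s ∈ A, ∀ t ∈ B, ¬(s = x ∧ t = x)) →
      Tendsto (fun ε => xiMeas μ N A B x ε) (nhdsWithin 0 (Set.Ioi 0)) (nhds 0) := by
    intro A B h
    have h1 := hMeasT A B
    have h2 : ∑ s ∈ A, ∑ t ∈ B, (if s = x ∧ t = x then (1:ℝ) else 0) = 0 :=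
      Finset.sum_eq_zero fun s hs => Finset.sum_eq_zero fun t ht => if_neg (h s hs t ht)
    rw [h2, mul_zero] at h1
    exact h1
  have hLamT0 : ∀ A B : Finset (EuclideanSpace ℝ (Fin n)), (∀ s ∈ A, ∀ t ∈ B, ¬(s = x ∧ t = x)) →
      Tendsto (fun ε => xiLam μ N A B x ε) (nhdsWithin 0 (Set.Ioi 0)) (nhds 0) := by
    intro A B h
    simp only [xiLam]
    have h1 : Tendsto (fun ε => ∑ s ∈ A, ∑ t ∈ B, ∫ l in mixSet s t x ε, l ∂μ)
        (nhdsWithin 0 (Set.Ioi 0)) (nhds (∑ s ∈ A, ∑ t ∈ B, (0:ℝ))) :=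
      tendsto_finset_sum _ fun s hs => tendsto_finset_sum _ fun t ht => hG s t (h s hs t ht)
    have h2 := h1.const_mul ((1:ℝ)/(N:ℝ)^2)
    simp only [Finset.sum_const_zero, mul_zero] at h2
    exact h2
  -- classification of cross terms
  have hcross : ∀ q j : Fin k, q ≠ j → ∀ s ∈ X q, ∀ t ∈ X j, ¬(s = x ∧ t = x) := by
    rintro q j hqj s hs t ht ⟨rfl, rfl⟩
    exact (Finset.disjoint_left.1 (hdisj q j hqj)) hs ht
  have hself : ∀ q : Fin k, q ≠ i → ∀ s ∈ X q, ∀ t ∈ X q, ¬(s = x ∧ t = x) := by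
    rintro q hq s hs t ht ⟨rfl, rfl⟩
    exact hxnot q hq hs
  -- limit of hNum q
  have hNumT : ∀ q : Fin k, Tendsto (fun ε => hNum μ N X q x ε)
      (nhdsWithin 0 (Set.Ioi 0)) (nhds (if q = i then 1/(N:ℝ)^2 else 0)) := by
    intro q
    have hsumT : Tendsto (fun ε => ∑ j ∈ Finset.univ.filter (fun j => j ≠ q),
        (xiLam μ N (X q) (X j) x ε +
          (xiMeas μ N (X j) (X q) x ε - xiLam μ N (X j) (X q) x ε)))
        (nhdsWithin 0 (Set.Ioi 0)) (nhds 0) := by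
      have := tendsto_finset_sum (Finset.univ.filter (fun j : Fin k => j ≠ q))
        (f := fun j ε => xiLam μ N (X q) (X j) x ε +
          (xiMeas μ N (X j) (X q) x ε - xiLam μ N (X j) (X q) x ε))
        (fun j hj => by
          have hjq : j ≠ q := (Finset.mem_filter.1 hj).2
          exact (hLamT0 (X q) (X j) (hcross q j (Ne.symm hjq))).add
            ((hMeasT0 (X j) (X q) (hcross j q hjq)).sub
              (hLamT0 (X j) (X q) (hcross j q hjq))))
      simpa using this
    by_cases hq : q = i
    · subst hq
      rw [if_pos rfl]
      have h1 := hMeasT (X q) (X q)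
      have h2 : ∑ s ∈ X q, ∑ t ∈ X q, (if s = x ∧ t = x then (1:ℝ) else 0) = 1 := by
        have : ∀ s ∈ X q, (∑ t ∈ X q, (if s = x ∧ t = x then (1:ℝ) else 0))
            = if s = x then 1 else 0 := by
          intro s _
          by_cases hs : s = x
          · simp [hs, Finset.sum_ite_eq', hx]
          · simp [hs]
        rw [Finset.sum_congr rfl this, Finset.sum_ite_eq', if_pos hx]
      rw [h2, mul_one] at h1
      simpa [hNum] using h1.add hsumT
    · rw [if_neg hq]
      have h1 := hMeasT0 (X q) (X q) (hself q hq)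
      simpa [hNum] using h1.add hsumT
  -- limit of hDen
  have hDenT : Tendsto (fun ε => hDen μ N X x ε) (nhdsWithin 0 (Set.Ioi 0))
      (nhds (1/(N:ℝ)^2)) := by
    have h1 := tendsto_finset_sum (Finset.univ : Finset (Fin k))
      (f := fun q ε => hNum μ N X q x ε) (fun q _ => hNumT q)
    have h2 : ∑ q : Fin k, (if q = i then 1/(N:ℝ)^2 else 0) = 1/(N:ℝ)^2 := by
      rw [Finset.sum_ite_eq', if_pos (Finset.mem_univ i)]
    rw [h2] at h1
    exact h1
  -- positivity of the denominator
  have hpos : ∀ ε > (0:ℝ), 0 < hDen μ N X x ε := by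
    intro ε hε
    have hMeasNN : ∀ A B : Finset (EuclideanSpace ℝ (Fin n)), 0 ≤ xiMeas μ N A B x ε := by
      intro A B
      apply mul_nonneg (le_of_lt hN2)
      exact Finset.sum_nonneg fun s _ =>
        Finset.sum_nonneg fun t _ => ENNReal.toReal_nonneg
    have hLamNN : ∀ A B : Finset (EuclideanSpace ℝ (Fin n)), 0 ≤ xiLam μ N A B x ε := by
      intro A B
      apply mul_nonneg (le_of_lt hN2)
      exact Finset.sum_nonneg fun s _ =>
        Finset.sum_nonneg fun t _ => mixInt_nonneg μ s t x ε
    have hLamLe : ∀ A B : Finset (EuclideanSpace ℝ (Fin n)), xiLam μ N A B x ε ≤ xiMeas μ N A B x ε := by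
      intro A B
      apply mul_le_mul_of_nonneg_left _ (le_of_lt hN2)
      exact Finset.sum_le_sum fun s _ =>
        Finset.sum_le_sum fun t _ => mixInt_le μ s t x ε
    have hNumNN : ∀ q : Fin k, 0 ≤ hNum μ N X q x ε := by
      intro q
      apply add_nonneg (hMeasNN _ _)
      exact Finset.sum_nonneg fun j _ =>
        add_nonneg (hLamNN _ _) (sub_nonneg.2 (hLamLe _ _))
    have hone : (μ (mixSet x x x ε)).toReal = 1 := by
      rw [mixSet_self x hε, hIcc1, ENNReal.toReal_one]
    have hsum1 : (1:ℝ) ≤ ∑ s ∈ X i, ∑ t ∈ X i, (μ (mixSet s t x ε)).toReal := by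
      calc (1:ℝ) = (μ (mixSet x x x ε)).toReal := hone.symm
        _ ≤ ∑ t ∈ X i, (μ (mixSet x t x ε)).toReal :=
          Finset.single_le_sum (f := fun t => (μ (mixSet x t x ε)).toReal)
            (fun _ _ => ENNReal.toReal_nonneg) hx
        _ ≤ ∑ s ∈ X i, ∑ t ∈ X i, (μ (mixSet s t x ε)).toReal :=
          Finset.single_le_sum
            (f := fun s => ∑ t ∈ X i, (μ (mixSet s t x ε)).toReal)
            (fun s _ => Finset.sum_nonneg fun t _ => ENNReal.toReal_nonneg) hx
    have hNumi : 1/(N:ℝ)^2 ≤ hNum μ N X i x ε := by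
      have h1 : 1/(N:ℝ)^2 ≤ xiMeas μ N (X i) (X i) x ε := by
        calc 1/(N:ℝ)^2 = (1/(N:ℝ)^2) * 1 := (mul_one _).symm
          _ ≤ xiMeas μ N (X i) (X i) x ε :=
            mul_le_mul_of_nonneg_left hsum1 (le_of_lt hN2)
      calc 1/(N:ℝ)^2 ≤ xiMeas μ N (X i) (X i) x ε := h1
        _ ≤ hNum μ N X i x ε := le_add_of_nonneg_right
          (Finset.sum_nonneg fun j _ =>
            add_nonneg (hLamNN _ _) (sub_nonneg.2 (hLamLe _ _)))
    calc (0:ℝ) < 1/(N:ℝ)^2 := hN2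
      _ ≤ hNum μ N X i x ε := hNumi
      _ ≤ hDen μ N X x ε :=
        Finset.single_le_sum (fun q _ => hNumNN q) (Finset.mem_univ i)
  refine ⟨hpos, ?_, ?_⟩
  · have h := Filter.Tendsto.div (hNumT i) hDenT (ne_of_gt hN2)
    rw [if_pos rfl, div_self (ne_of_gt hN2)] at h
    exact h
  · intro j hj
    have h := Filter.Tendsto.div (hNumT j) hDenT (ne_of_gt hN2)
    rw [if_neg hj, zero_div] at h
    exact h
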